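/- Let f take finitely many values β₁ > β₂ > ... > β_k each with positive π-probability, let c ∈ (0,1), and define F(r) = Σ_j (1-c)e^{β_j}/(r - c e^{β_j})·π(f = β_j). Then for each j = 1,...,k there exists r_j in the open interval (c e^{β_j}, c e^{β_{j-1}}) (with β₀ = +∞, i.e. r₁ ∈ (ce^{β₁}, ∞)) satisfying F(r_j) = 1. -/

import Mathlib

open Filter Topology

private lemma stmt10_key {k : ℕ} (a : Fin k → ℝ) (ha : StrictAnti a) (C : Fin k → ℝ)
    (hC : ∀ i, 0 < C i) (j : Fin k) :
    ∃ r, a j < r ∧ (∀ j', j' < j → r < a j') ∧ (∑ i, C i / (r - a i)) = 1 := by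
  set G : ℝ → ℝ := fun r => ∑ i, C i / (r - a i) with hGdef
  -- G blows up to +∞ from the right of any a q, and to -∞ from the left.
  have hrest : ∀ (q : Fin k) (s : Filter ℝ), s ≤ 𝓝 (a q) →
      Tendsto (fun r => ∑ i ∈ Finset.univ.erase q, C i / (r - a i)) s
        (𝓝 (∑ i ∈ Finset.univ.erase q, C i / (a q - a i))) := by
    intro q s hs
    apply Tendsto.mono_left _ hs
    apply tendsto_finset_sum
    intro i hi
    have hne : a q - a i ≠ 0 := sub_ne_zero.mpr
      (fun h => (Finset.ne_of_mem_erase hi) (ha.injective h.symm))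
    exact (continuousAt_const.div ((continuous_id.sub continuous_const).continuousAt) hne)
  have hGsplit : ∀ (q : Fin k) (r : ℝ),
      G r = C q / (r - a q) + ∑ i ∈ Finset.univ.erase q, C i / (r - a i) := by
    intro q r
    rw [hGdef]
    exact (Finset.add_sum_erase _ _ (Finset.mem_univ q)).symm
  have hup : Tendsto G (𝓝[>] (a j)) atTop := by
    have hsub : Tendsto (fun r : ℝ => r - a j) (𝓝[>] (a j)) (𝓝[>] 0) := by
      apply tendsto_nhdsWithin_of_tendsto_nhds_of_eventually_within
      · have := (continuous_sub_right (a j)).tendsto (a j)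
        simpa using this.mono_left nhdsWithin_le_nhds
      · filter_upwards [self_mem_nhdsWithin] with r hr
        simpa [sub_pos] using hr
    have h1 : Tendsto (fun r => C j / (r - a j)) (𝓝[>] (a j)) atTop := by
      have h := (tendsto_inv_nhdsGT_zero.comp hsub).const_mul_atTop (hC j)
      simpa [div_eq_mul_inv, Function.comp] using h
    have h2 := hrest j (𝓝[>] (a j)) nhdsWithin_le_nhds
    have := h1.atTop_add h2
    apply this.congr
    intro r
    exact (hGsplit j r).symm
  -- eventually-gt point r₁
  obtain ⟨r₁, hr₁gt, hr₁mem⟩ :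
      ∃ r₁, 1 < G r₁ ∧ a j < r₁ ∧ (∀ j', j' < j → r₁ < a j') := by
    have hmem : ∀ᶠ r in 𝓝[>] (a j), a j < r ∧ ∀ j', j' < j → r < a j' := by
      rcases Nat.eq_zero_or_pos j.val with h0 | hp
      · filter_upwards [self_mem_nhdsWithin] with r hr
        refine ⟨hr, fun j' hj' => absurd hj' ?_⟩
        simp [Fin.lt_def, h0]
      · have hjk : j.val - 1 < k := by omega
        set p : Fin k := ⟨j.val - 1, hjk⟩ with hp'
        have hpj : p < j := by simp [Fin.lt_def, hp']; omega
        have hap : a j < a p := ha hpj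
        filter_upwards [Ioo_mem_nhdsGT_of_mem ⟨le_refl _, hap⟩] with r hr
        refine ⟨hr.1, fun j' hj' => lt_of_lt_of_le hr.2 (ha.antitone ?_)⟩
        simp only [Fin.le_def, hp']
        have := hj'
        simp only [Fin.lt_def] at this
        omega
    exact ((hup.eventually_gt_atTop 1).and hmem).exists
  -- eventually-lt point r₂
  obtain ⟨r₂, hr₂lt, hr₂gt, hr₂mem⟩ :
      ∃ r₂, G r₂ < 1 ∧ r₁ < r₂ ∧ (∀ j', j' < j → r₂ < a j') := by
    rcases Nat.eq_zero_or_pos j.val with h0 | hp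
    · -- G → 0 at +∞
      have hzero : Tendsto G atTop (𝓝 0) := by
        rw [hGdef]
        have : Tendsto (fun r : ℝ => ∑ i : Fin k, C i / (r - a i)) atTop
            (𝓝 (∑ i : Fin k, (0:ℝ))) := by
          apply tendsto_finset_sum
          intro i _
          have hg : Tendsto (fun r : ℝ => r - a i) atTop atTop :=
            tendsto_atTop_add_const_right _ (-a i) tendsto_id
          exact tendsto_const_nhds.div_atTop hg
        simpa using this
      have h1 : ∀ᶠ r in atTop, G r < 1 := hzero.eventually_lt_const one_pos
      have h2 : ∀ᶠ r in atTop, r₁ < r := eventually_gt_atTop r₁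
      obtain ⟨r₂, hA, hB⟩ := (h1.and h2).exists
      exact ⟨r₂, hA, hB, fun j' hj' => absurd hj' (by simp [Fin.lt_def, h0])⟩
    · have hjk : j.val - 1 < k := by omega
      set p : Fin k := ⟨j.val - 1, hjk⟩ with hp'
      have hpj : p < j := by simp [Fin.lt_def, hp']; omega
      have hap : a j < a p := ha hpj
      have hr₁p : r₁ < a p := hr₁mem.2 p hpj
      have hdown : Tendsto G (𝓝[<] (a p)) atBot := by
        have hsub : Tendsto (fun r : ℝ => a p - r) (𝓝[<] (a p)) (𝓝[>] 0) := by
          apply tendsto_nhdsWithin_of_tendsto_nhds_of_eventually_within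
          · have : Tendsto (fun r : ℝ => a p - r) (𝓝 (a p)) (𝓝 (a p - a p)) := (continuous_const.sub continuous_id : Continuous fun r : ℝ => a p - r).tendsto (a p)
            simpa using this.mono_left nhdsWithin_le_nhds
          · filter_upwards [self_mem_nhdsWithin] with r hr
            simpa [sub_pos] using hr
        have hpos : Tendsto (fun r => C p / (a p - r)) (𝓝[<] (a p)) atTop := by
          have h := (tendsto_inv_nhdsGT_zero.comp hsub).const_mul_atTop (hC p)
          simpa [div_eq_mul_inv, Function.comp] using h
        have h1 : Tendsto (fun r => C p / (r - a p)) (𝓝[<] (a p)) atBot := by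
          have := tendsto_neg_atTop_atBot.comp hpos
          apply this.congr
          intro r
          simp only [Function.comp]
          rw [← neg_sub r (a p), div_neg, neg_neg]
        have h2 := hrest p (𝓝[<] (a p)) nhdsWithin_le_nhds
        have := h1.atBot_add h2
        apply this.congr
        intro r
        exact (hGsplit p r).symm
      have h1 : ∀ᶠ r in 𝓝[<] (a p), G r < 1 := hdown.eventually (eventually_lt_atBot 1)
      have h2 : ∀ᶠ r in 𝓝[<] (a p), r ∈ Set.Ioo r₁ (a p) :=
        Ioo_mem_nhdsLT_of_mem ⟨hr₁p, le_refl _⟩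
      obtain ⟨r₂, hA, hB⟩ := (h1.and h2).exists
      refine ⟨r₂, hA, hB.1, fun j' hj' => lt_of_lt_of_le hB.2 (ha.antitone ?_)⟩
      simp only [Fin.le_def, hp']
      have := hj'
      simp only [Fin.lt_def] at this
      omega
  -- denominators don't vanish on [r₁, r₂]
  have hden : ∀ r ∈ Set.Icc r₁ r₂, ∀ i : Fin k, r - a i ≠ 0 := by
    intro r hr i
    rcases lt_or_ge i j with hij | hij
    · have : r < a i := lt_of_le_of_lt hr.2 (hr₂mem i hij)
      exact sub_ne_zero.mpr (ne_of_lt this)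
    · have : a i < r := lt_of_le_of_lt (ha.antitone hij) (lt_of_lt_of_le hr₁mem.1 hr.1)
      exact sub_ne_zero.mpr (ne_of_gt this)
  have hcont : ContinuousOn G (Set.Icc r₁ r₂) := by
    rw [hGdef]
    apply continuousOn_finset_sum
    intro i _
    exact continuousOn_const.div ((continuous_sub_right (a i)).continuousOn)
      (fun r hr => hden r hr i)
  have h1mem : (1:ℝ) ∈ Set.Icc (G r₂) (G r₁) := ⟨le_of_lt hr₂lt, le_of_lt hr₁gt⟩
  obtain ⟨r, hrmem, hGr⟩ := intermediate_value_Icc' (le_of_lt hr₂gt) hcont h1mem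
  exact ⟨r, lt_of_lt_of_le hr₁mem.1 hrmem.1,
    fun j' hj' => lt_of_le_of_lt hrmem.2 (hr₂mem j' hj'), hGr⟩

open MeasureTheory in
theorem stmt_10 {Ω : Type*} [MeasurableSpace Ω] (π : Measure Ω) [IsProbabilityMeasure π]
    (c : ℝ) (hc : c ∈ Set.Ioo (0:ℝ) 1) (k : ℕ) (hk : 0 < k)
    (f : Ω → ℝ) (hf : Measurable f)
    (β : Fin k → ℝ) (hβ : StrictAnti β)
    (hpos : ∀ j, 0 < π {x | f x = β j})
    (hfull : ∀ᵐ x ∂π, ∃ j, f x = β j) :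
    ∀ j : Fin k, ∃ r : ℝ,
      c * Real.exp (β j) < r ∧
      (∀ j' : Fin k, j' < j → r < c * Real.exp (β j')) ∧
      ∑ i : Fin k, (1 - c) * Real.exp (β i) / (r - c * Real.exp (β i)) *
        (π {x | f x = β i}).toReal = 1 := by
  intro j
  have hw : ∀ i, 0 < (π {x | f x = β i}).toReal := fun i =>
    ENNReal.toReal_pos (hpos i).ne' (measure_lt_top π _).ne
  have ha : StrictAnti (fun i => c * Real.exp (β i)) := fun i i' h =>
    mul_lt_mul_of_pos_left (Real.exp_lt_exp.mpr (hβ h)) hc.1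
  have hC : ∀ i, 0 < (1 - c) * Real.exp (β i) * (π {x | f x = β i}).toReal := fun i =>
    mul_pos (mul_pos (by linarith [hc.2]) (Real.exp_pos _)) (hw i)
  obtain ⟨r, h1, h2, h3⟩ := stmt10_key _ ha _ hC j
  refine ⟨r, h1, h2, ?_⟩
  conv_rhs => rw [← h3]
  exact Finset.sum_congr rfl fun i _ => div_mul_eq_mul_div _ _ _
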